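/- Let $p > 1$ and $q < 1$ with $p - q > 0$. Let $0 < v_y \le v_x < 2 v_y$ be real numbers. Then $\big(v_x^{(p-q)/p} - v_y^{(p-q)/p}\big)^p \le \Big(\frac{p-q}{p}\Big)^p \cdot \max(2^{-q}, 1) \cdot \frac{(v_x - v_y)^p}{v_y^{q}}$. -/

import Mathlib

open Real Set

lemma key_mvt (r : ℝ) (hr : 0 < r) (b a : ℝ) (hb : 0 < b) (hba : b ≤ a) (c : ℝ)
    (hc : ∀ t ∈ Set.Icc b a, t ^ (r - 1) ≤ c) :
    a ^ r - b ^ r ≤ r * c * (a - b) := by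
  rcases eq_or_lt_of_le hba with rfl | hlt
  · simp
  · have hcont : ContinuousOn (fun t : ℝ => t ^ r) (Icc b a) := by
      apply ContinuousOn.rpow_const continuousOn_id
      intro t ht
      exact Or.inl (ne_of_gt (lt_of_lt_of_le hb ht.1))
    have hderiv : ∀ x ∈ Ioo b a, HasDerivAt (fun t : ℝ => t ^ r) (r * x ^ (r - 1)) x := by
      intro x hx
      exact Real.hasDerivAt_rpow_const (Or.inl (ne_of_gt (lt_trans hb hx.1)))
    obtain ⟨x, hx, hxeq⟩ := exists_hasDerivAt_eq_slope (fun t : ℝ => t ^ r)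
      (fun x => r * x ^ (r - 1)) hlt hcont hderiv
    have hxc : x ^ (r - 1) ≤ c := hc x ⟨le_of_lt hx.1, le_of_lt hx.2⟩
    have hab : (0:ℝ) < a - b := sub_pos.mpr hlt
    have : a ^ r - b ^ r = r * x ^ (r - 1) * (a - b) := by
      field_simp at hxeq
      linarith [hxeq]
    rw [this]
    have : r * x ^ (r - 1) * (a - b) ≤ r * c * (a - b) := by
      apply mul_le_mul_of_nonneg_right _ (le_of_lt hab)
      exact mul_le_mul_of_nonneg_left hxc (le_of_lt hr)
    linarith

theorem stmt_4 (p q : ℝ) (hp : 1 < p) (hq : q < 1) (hpq : 0 < p - q)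
    (vx vy : ℝ) (hvy : 0 < vy) (h₁ : vy ≤ vx) (h₂ : vx < 2 * vy) :
    (vx ^ ((p - q)/p) - vy ^ ((p - q)/p)) ^ p ≤
      ((p - q)/p) ^ p * max (2 ^ (-q)) 1 * ((vx - vy) ^ p / vy ^ q) := by
  have hp0 : (0:ℝ) < p := lt_trans one_pos hp
  set α := (p - q) / p with hα
  have hα0 : 0 < α := div_pos hpq hp0
  set M : ℝ := max (2 ^ (-q)) 1 with hM
  have hM1 : (1:ℝ) ≤ M := le_max_right _ _
  have hM0 : (0:ℝ) < M := lt_of_lt_of_le one_pos hM1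
  have hα1 : α - 1 = -q / p := by rw [hα]; field_simp; ring
  set c : ℝ := M ^ (1/p) * vy ^ (-q/p) with hc
  have hMp1 : (1:ℝ) ≤ M ^ (1/p) := Real.one_le_rpow hM1 (by positivity)
  have hvyq : (0:ℝ) < vy ^ (-q/p) := Real.rpow_pos_of_pos hvy _
  have hcb : ∀ t ∈ Set.Icc vy vx, t ^ (α - 1) ≤ c := by
    intro t ht
    rw [hα1]
    rcases le_or_gt 0 q with hq0 | hq0
    · have h1 : t ^ (-q/p) ≤ vy ^ (-q/p) :=
        Real.rpow_le_rpow_of_nonpos hvy ht.1 (div_nonpos_of_nonpos_of_nonneg (neg_nonpos.mpr hq0) (le_of_lt hp0))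
      calc t ^ (-q/p) ≤ vy ^ (-q/p) := h1
        _ ≤ M ^ (1/p) * vy ^ (-q/p) := le_mul_of_one_le_left (le_of_lt hvyq) hMp1
    · have ht0 : 0 ≤ t := le_trans (le_of_lt hvy) ht.1
      have h1 : t ^ (-q/p) ≤ (2 * vy) ^ (-q/p) := by
        exact Real.rpow_le_rpow ht0 (le_of_lt (lt_of_le_of_lt ht.2 h₂))
          (le_of_lt (div_pos (neg_pos.mpr hq0) hp0))
      have h2 : (2 * vy) ^ (-q/p) = (2:ℝ) ^ (-q/p) * vy ^ (-q/p) :=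
        Real.mul_rpow (by norm_num) (le_of_lt hvy)
      have h3 : (2:ℝ) ^ (-q/p) = ((2:ℝ) ^ (-q)) ^ (1/p) := by
        rw [← Real.rpow_mul (by norm_num : (0:ℝ) ≤ 2)]
        congr 1; ring
      have h4 : ((2:ℝ) ^ (-q)) ^ (1/p) ≤ M ^ (1/p) :=
        Real.rpow_le_rpow (by positivity) (le_max_left _ _) (by positivity)
      calc t ^ (-q/p) ≤ (2 * vy) ^ (-q/p) := h1
        _ = (2:ℝ) ^ (-q/p) * vy ^ (-q/p) := h2
        _ ≤ M ^ (1/p) * vy ^ (-q/p) := by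
            apply mul_le_mul_of_nonneg_right _ (le_of_lt hvyq)
            rw [h3]; exact h4
  have hkey : vx ^ α - vy ^ α ≤ α * c * (vx - vy) :=
    key_mvt α hα0 vy vx hvy h₁ c hcb
  have hL0 : 0 ≤ vx ^ α - vy ^ α := by
    have := Real.rpow_le_rpow (le_of_lt hvy) h₁ (le_of_lt hα0)
    linarith
  have hpow := Real.rpow_le_rpow hL0 hkey (le_of_lt hp0)
  refine le_trans hpow ?_
  have hc0 : 0 ≤ c := by positivity
  have hsub : 0 ≤ vx - vy := sub_nonneg.mpr h₁
  rw [Real.mul_rpow (by positivity) hsub, Real.mul_rpow (le_of_lt hα0) hc0]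
  have hcp : c ^ p = M * (vy ^ q)⁻¹ := by
    rw [hc, Real.mul_rpow (by positivity) (le_of_lt hvyq),
        ← Real.rpow_mul (le_of_lt hM0), ← Real.rpow_mul (le_of_lt hvy),
        one_div_mul_cancel (ne_of_gt hp0), div_mul_cancel₀ _ (ne_of_gt hp0),
        Real.rpow_one, Real.rpow_neg (le_of_lt hvy)]
  rw [hcp, div_eq_mul_inv]
  exact le_of_eq (by ring)
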